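/- For all integers n ≥ 1, sqrt((n + 1/2)/(2π)) ≤ Ω_{n-1}/Ω_n ≤ sqrt((n + π/2 - 1)/(2π)), where Ω_n = π^(n/2)/Γ(n/2 + 1), and the constants 1/2 and π/2 - 1 are best possible. -/

import Mathlib

open Real Filter
noncomputable def unitBallVolume (n : ℕ) : ℝ := π ^ ((n : ℝ) / 2) / Real.Gamma ((n : ℝ) / 2 + 1)

lemma ubv_pos (n : ℕ) : 0 < unitBallVolume n := by
  unfold unitBallVolume
  have h := Real.Gamma_pos_of_pos (show (0:ℝ) < (n:ℝ)/2 + 1 by positivity)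
  positivity

lemma ubv_succ_succ (n : ℕ) : unitBallVolume (n+2) = 2*π/((n:ℝ)+2) * unitBallVolume n := by
  unfold unitBallVolume
  have hg : Real.Gamma ((n:ℝ)/2 + 1 + 1) = ((n:ℝ)/2+1) * Real.Gamma ((n:ℝ)/2+1) :=
    Real.Gamma_add_one (by positivity)
  have hc : ((n+2:ℕ):ℝ)/2 = (n:ℝ)/2 + 1 := by push_cast; ring
  have hgne : Real.Gamma ((n:ℝ)/2+1) ≠ 0 :=
    ne_of_gt (Real.Gamma_pos_of_pos (by positivity))
  rw [hc, hg, Real.rpow_add_one (ne_of_gt pi_pos)]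
  field_simp

noncomputable def rr (k : ℕ) : ℝ := unitBallVolume k / unitBallVolume (k+1)

lemma rr_pos (k : ℕ) : 0 < rr k := div_pos (ubv_pos _) (ubv_pos _)

lemma rr_mul (k : ℕ) : rr k * rr (k+1) = ((k:ℝ)+2)/(2*π) := by
  unfold rr
  have h2 : unitBallVolume (k+2) = 2*π/((k:ℝ)+2) * unitBallVolume k := ubv_succ_succ k
  have h0 := ubv_pos k
  have h1 := ubv_pos (k+1)
  have h3 := ubv_pos (k+2)
  have hpi := pi_pos
  rw [show k+1+1 = k+2 from rfl, h2]
  field_simp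

lemma ubv0 : unitBallVolume 0 = 1 := by
  unfold unitBallVolume
  norm_num [Real.Gamma_one]

lemma ubv1 : unitBallVolume 1 = 2 := by
  unfold unitBallVolume
  push_cast
  rw [Real.Gamma_add_one (by norm_num : (1:ℝ)/2 ≠ 0), Real.Gamma_one_half_eq,
    ← Real.sqrt_eq_rpow]
  have hsp : Real.sqrt π > 0 := Real.sqrt_pos.mpr pi_pos
  field_simp

lemma rr_zero : rr 0 = 1/2 := by
  unfold rr
  rw [ubv0, ubv1]

lemma rr_one : rr 1 = 2/π := by
  have h := rr_mul 0
  rw [rr_zero] at h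
  have hpi := pi_pos
  field_simp at h ⊢
  simp only [Nat.cast_zero, zero_add] at h
  linarith [h]

lemma rr_step (k : ℕ) : rr (k+2) = rr k * ((k:ℝ)+3)/((k:ℝ)+2) := by
  have h1 := rr_mul k
  have h2 := rr_mul (k+1)
  rw [show k+1+1=k+2 from rfl] at h2
  push_cast at h2
  have hp1 := rr_pos (k+1)
  have hpi := pi_pos
  have hne : rr (k+1) ≠ 0 := ne_of_gt hp1
  have e1 : rr k = (((k:ℝ)+2)/(2*π)) / rr (k+1) := by
    rw [eq_div_iff hne]; exact h1
  have e2 : rr (k+2) = (((k:ℝ)+3)/(2*π)) / rr (k+1) := by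
    rw [eq_div_iff hne, mul_comm, h2]; ring
  rw [e1, e2]
  have hk2 : ((k:ℝ)+2) ≠ 0 := by positivity
  field_simp

noncomputable def vv (k : ℕ) : ℝ := 2*π*(rr k)^2/((k:ℝ) + 3/2)
noncomputable def ww (k : ℕ) : ℝ := 2*π*(rr k)^2/((k:ℝ) + π/2)

lemma vv_pos (k : ℕ) : 0 < vv k := by
  unfold vv
  have := rr_pos k
  have := pi_pos
  positivity

lemma vv_mul (k : ℕ) : vv k * vv (k+1) = (((k:ℝ)+2)^2)/((((k:ℝ)+3/2))*(((k:ℝ)+5/2))) := by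
  unfold vv
  have h := rr_mul k
  have hpi := pi_pos
  have h32 : ((k:ℝ)+3/2) ≠ 0 := by positivity
  have h52 : ((k:ℝ)+5/2) ≠ 0 := by positivity
  push_cast
  have hsq : (2*π*(rr k)^2) * (2*π*(rr (k+1))^2) = ((k:ℝ)+2)^2 := by
    have : (rr k * rr (k+1))^2 = (((k:ℝ)+2)/(2*π))^2 := by rw [h]
    field_simp at this ⊢
    nlinarith [this]
  field_simp
  nlinarith [hsq]

lemma wallis_eq (m : ℕ) :
    π^2*(rr (2*m+1))^2/(2*(m:ℝ)+3) = Real.Wallis.W (m+1) := by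
  induction m with
  | zero =>
    rw [rr_one, Real.Wallis.W_succ]
    have : Real.Wallis.W 0 = 1 := by simp [Real.Wallis.W]
    rw [this]
    have hpi := pi_pos
    push_cast
    field_simp
    ring
  | succ m ih =>
    have hs : rr (2*(m+1)+1) = rr (2*m+1) * ((2*(m:ℝ)+1)+3)/((2*(m:ℝ)+1)+2) := by
      have := rr_step (2*m+1)
      push_cast at this
      rw [show 2*(m+1)+1 = 2*m+1+2 from by omega]
      convert this using 3 <;> push_cast <;> ring
    rw [Real.Wallis.W_succ (m+1), ← ih, hs]
    have h3 : (2*(m:ℝ)+3) ≠ 0 := by positivity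
    have h5 : (2*(m:ℝ)+5) ≠ 0 := by positivity
    have h2 : (2*(m:ℝ)+2) ≠ 0 := by positivity
    have hpi := pi_pos
    push_cast
    field_simp
    ring

lemma tendsto_ratio (b c : ℝ) :
    Tendsto (fun m : ℕ => ((m:ℝ)+b)/((m:ℝ)+c)) atTop (nhds 1) := by
  have h1 : Tendsto (fun m : ℕ => (m:ℝ)+c) atTop atTop :=
    tendsto_atTop_add_const_right _ c tendsto_natCast_atTop_atTop
  have h0 : Tendsto (fun m : ℕ => (b - c)/((m:ℝ)+c)) atTop (nhds 0) :=
    Tendsto.div_atTop tendsto_const_nhds h1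
  have key : Tendsto (fun m : ℕ => 1 + (b - c)/((m:ℝ)+c)) atTop (nhds 1) := by
    simpa using tendsto_const_nhds.add h0
  apply key.congr'
  filter_upwards [h1.eventually_ne_atTop 0] with m hm
  field_simp
  ring

lemma tendsto_vv_odd : Tendsto (fun m : ℕ => vv (2*m+1)) atTop (nhds 1) := by
  have hW : Tendsto (fun m : ℕ => Real.Wallis.W (m+1)) atTop (nhds (π/2)) :=
    Real.Wallis.tendsto_W_nhds_pi_div_two.comp (tendsto_add_atTop_nat 1)
  have h1 : Tendsto (fun m : ℕ => (2/π) * Real.Wallis.W (m+1)) atTop (nhds 1) := by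
    have := hW.const_mul (2/π)
    have hpi := pi_pos
    have : (2/π) * (π/2) = 1 := by field_simp
    simpa [this] using hW.const_mul (2/π)
  have h2 := h1.mul (tendsto_ratio (3/2) (5/4))
  rw [mul_one] at h2
  apply h2.congr
  intro m
  rw [← wallis_eq m]
  unfold vv
  have hpi := pi_pos
  have ha : (2*(m:ℝ)+3) ≠ 0 := by positivity
  have hb : ((m:ℝ)+5/4) ≠ 0 := by positivity
  push_cast
  have hc : ((2*(m:ℝ)+1)+3/2) ≠ 0 := by positivity
  field_simp
  ring

lemma tendsto_vv_even : Tendsto (fun m : ℕ => vv (2*m)) atTop (nhds 1) := by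
  have hnum : Tendsto (fun m : ℕ => (((m:ℝ)+1)/((m:ℝ)+3/4)) * (((m:ℝ)+1)/((m:ℝ)+5/4)))
      atTop (nhds 1) := by
    simpa using (tendsto_ratio 1 (3/4)).mul (tendsto_ratio 1 (5/4))
  have h := hnum.div tendsto_vv_odd one_ne_zero
  rw [div_one] at h
  apply h.congr
  intro m
  have hv := vv_mul (2*m)
  have hvo := vv_pos (2*m+1)
  have hpi := pi_pos
  have h34 : ((m:ℝ)+3/4) ≠ 0 := by positivity
  have h54 : ((m:ℝ)+5/4) ≠ 0 := by positivity
  have h32 : ((2*(m:ℝ))+3/2) ≠ 0 := by positivity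
  have h52 : ((2*(m:ℝ))+5/2) ≠ 0 := by positivity
  push_cast at hv
  simp only [Pi.div_apply]
  rw [div_eq_iff (ne_of_gt hvo), mul_comm (vv (2*m))] at *
  rw [hv]
  field_simp
  ring

lemma tendsto_vv_shift (k : ℕ) : Tendsto (fun j : ℕ => vv (k+2*j)) atTop (nhds 1) := by
  rcases Nat.even_or_odd k with ⟨a, rfl⟩ | ⟨a, rfl⟩
  · have h := tendsto_vv_even.comp (tendsto_add_atTop_nat a)
    apply h.congr
    intro j
    simp only [Function.comp_apply]
    congr 1
    omega
  · have h := tendsto_vv_odd.comp (tendsto_add_atTop_nat a)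
    apply h.congr
    intro j
    simp only [Function.comp_apply]
    congr 1
    omega

lemma vv_anti (k : ℕ) : vv (k+2) ≤ vv k := by
  unfold vv
  have hs := rr_step k
  have hp := rr_pos k
  have hpi := pi_pos
  have h2 : ((k:ℝ)+2) ≠ 0 := by positivity
  have h32 : ((k:ℝ)+3/2) > 0 := by positivity
  have h72 : ((k:ℝ)+2+3/2) > 0 := by positivity
  push_cast
  have key : ((k:ℝ)+3)^2*((k:ℝ)+3/2) ≤ ((k:ℝ)+2)^2*((k:ℝ)+2+3/2) := by
    nlinarith [Nat.cast_nonneg (α := ℝ) k]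
  rw [hs, div_le_div_iff₀ h72 h32, div_pow,
    show 2*π*((rr k*((k:ℝ)+3))^2/((k:ℝ)+2)^2)*((k:ℝ)+3/2)
      = (2*π*(rr k*((k:ℝ)+3))^2*((k:ℝ)+3/2))/((k:ℝ)+2)^2 from by ring,
    div_le_iff₀ (by positivity)]
  nlinarith [mul_le_mul_of_nonneg_left key (show (0:ℝ) ≤ 2*π*(rr k)^2 by positivity)]

lemma vv_chain (k j : ℕ) : vv (k+2*j) ≤ vv k := by
  induction j with
  | zero => simp
  | succ j ih =>
    calc vv (k+2*(j+1)) = vv ((k+2*j)+2) := by rw [show k+2*(j+1) = (k+2*j)+2 from by omega]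
    _ ≤ vv (k+2*j) := vv_anti _
    _ ≤ vv k := ih

lemma one_le_vv (k : ℕ) : 1 ≤ vv k :=
  le_of_tendsto (tendsto_vv_shift k) (Filter.Eventually.of_forall fun j => vv_chain k j)

lemma ww_eq (k : ℕ) : ww k = vv k * (((k:ℝ)+3/2)/((k:ℝ)+π/2)) := by
  unfold vv ww
  have hpi := pi_pos
  have h1 : ((k:ℝ)+3/2) ≠ 0 := by positivity
  have h2 : ((k:ℝ)+π/2) ≠ 0 := by positivity
  field_simp

lemma ww_mono (k : ℕ) (hk : 2 ≤ k) : ww k ≤ ww (k+2) := by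
  unfold ww
  have hs := rr_step k
  have hp := rr_pos k
  have hpi := pi_pos
  have hpi314 := Real.pi_gt_d6
  have hk2 : (2:ℝ) ≤ (k:ℝ) := by exact_mod_cast hk
  have h2 : ((k:ℝ)+2) ≠ 0 := by positivity
  have ha : ((k:ℝ)+π/2) > 0 := by positivity
  have hb : ((k:ℝ)+2+π/2) > 0 := by positivity
  push_cast
  have key : ((k:ℝ)+2)^2*((k:ℝ)+2+π/2) ≤ ((k:ℝ)+3)^2*((k:ℝ)+π/2) := by
    nlinarith [hk2, hpi314]
  rw [hs, div_le_div_iff₀ ha hb, div_pow,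
    show 2*π*((rr k*((k:ℝ)+3))^2/((k:ℝ)+2)^2)*((k:ℝ)+π/2)
      = (2*π*(rr k*((k:ℝ)+3))^2*((k:ℝ)+π/2))/((k:ℝ)+2)^2 from by ring,
    le_div_iff₀ (by positivity)]
  nlinarith [mul_le_mul_of_nonneg_left key (show (0:ℝ) ≤ 2*π*(rr k)^2 by positivity)]

lemma ww_chain (k j : ℕ) (hk : 2 ≤ k) : ww k ≤ ww (k+2*j) := by
  induction j with
  | zero => simp
  | succ j ih =>
    calc ww k ≤ ww (k+2*j) := ih
    _ ≤ ww ((k+2*j)+2) := ww_mono _ (le_trans hk (by omega))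
    _ = ww (k+2*(j+1)) := by rw [show k+2*(j+1) = (k+2*j)+2 from by omega]

lemma tendsto_ww_shift (k : ℕ) : Tendsto (fun j : ℕ => ww (k+2*j)) atTop (nhds 1) := by
  have h1 := tendsto_vv_shift k
  have h2 := tendsto_ratio ((k:ℝ)/2+3/4) ((k:ℝ)/2+π/4)
  have h := h1.mul h2
  rw [mul_one] at h
  apply h.congr
  intro j
  rw [ww_eq]
  congr 1
  have hpi := pi_pos
  push_cast
  rw [div_eq_div_iff (by positivity) (by positivity)]
  ring

lemma ww_le_one (k : ℕ) : ww k ≤ 1 := by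
  match k with
  | 0 =>
    unfold ww
    rw [rr_zero]
    have hpi := pi_pos
    push_cast
    have he : 2*π*((1:ℝ)/2)^2/(0+π/2) = 1 := by
      field_simp
      ring
    rw [he]
  | 1 =>
    unfold ww
    rw [rr_one]
    have hpi := pi_pos
    have hpi314 := Real.pi_gt_d6
    rw [div_le_one (by positivity), div_pow]
    rw [show 2*π*((2:ℝ)^2/π^2) = 8/π from by field_simp; ring]
    rw [div_le_iff₀ (by positivity)]
    push_cast
    nlinarith
  | (n+2) =>
    exact ge_of_tendsto (tendsto_ww_shift (n+2))
      (Filter.Eventually.of_forall fun j => ww_chain (n+2) j (by omega))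

lemma sq_ratio_lb (m : ℕ) : ((m:ℝ)+3/2)/(2*π) ≤ (rr m)^2 := by
  have h := one_le_vv m
  unfold vv at h
  have hpi := pi_pos
  rw [le_div_iff₀ (by positivity)] at h
  rw [div_le_iff₀ (by positivity)]
  linarith

lemma sq_ratio_ub (m : ℕ) : (rr m)^2 ≤ ((m:ℝ)+π/2)/(2*π) := by
  have h := ww_le_one m
  unfold ww at h
  have hpi := pi_pos
  rw [div_le_one (by positivity)] at h
  rw [le_div_iff₀ (by positivity)]
  linarith

theorem alzer_ball_ratio :
    (∀ n : ℕ, 1 ≤ n →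
      Real.sqrt (((n : ℝ) + 1 / 2) / (2 * π)) ≤ unitBallVolume (n - 1) / unitBallVolume n ∧
      unitBallVolume (n - 1) / unitBallVolume n ≤ Real.sqrt (((n : ℝ) + (π / 2 - 1)) / (2 * π))) ∧
    (∀ A : ℝ, (∀ n : ℕ, 1 ≤ n →
        Real.sqrt (((n : ℝ) + A) / (2 * π)) ≤ unitBallVolume (n - 1) / unitBallVolume n) →
      A ≤ 1 / 2) ∧
    (∀ B : ℝ, (∀ n : ℕ, 1 ≤ n →
        unitBallVolume (n - 1) / unitBallVolume n ≤ Real.sqrt (((n : ℝ) + B) / (2 * π))) →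
      π / 2 - 1 ≤ B) := by
  have hpi := pi_pos
  have hratio : ∀ m : ℕ, unitBallVolume (m+1-1) / unitBallVolume (m+1) = rr m := fun m => rfl
  refine ⟨?_, ?_, ?_⟩
  · intro n hn
    obtain ⟨m, rfl⟩ : ∃ m, n = m + 1 := ⟨n-1, by omega⟩
    rw [hratio]
    constructor
    · have h := sq_ratio_lb m
      have heq : (((m+1:ℕ):ℝ) + 1/2)/(2*π) = ((m:ℝ)+3/2)/(2*π) := by push_cast; ring
      rw [heq]
      calc Real.sqrt (((m:ℝ)+3/2)/(2*π)) ≤ Real.sqrt ((rr m)^2) := Real.sqrt_le_sqrt h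
        _ = rr m := Real.sqrt_sq (rr_pos m).le
    · have h := sq_ratio_ub m
      have heq : (((m+1:ℕ):ℝ) + (π/2-1))/(2*π) = ((m:ℝ)+π/2)/(2*π) := by push_cast; ring
      rw [heq]
      calc rr m = Real.sqrt ((rr m)^2) := (Real.sqrt_sq (rr_pos m).le).symm
        _ ≤ Real.sqrt (((m:ℝ)+π/2)/(2*π)) := Real.sqrt_le_sqrt h
  · intro A hA
    by_contra hA2
    push_neg at hA2
    have key : ∀ m : ℕ, ((m:ℝ)+1+A)*((m:ℝ)+2+A) ≤ ((m:ℝ)+2)^2 := by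
      intro m
      have h1 := hA (m+1) (by omega)
      have h2 := hA (m+2) (by omega)
      rw [hratio] at h1
      rw [show m+2-1 = (m+1)+1-1 from rfl, show m+2 = (m+1)+1 from rfl, hratio] at h2
      have c1 : (((m+1:ℕ):ℝ) + A)/(2*π) = ((m:ℝ)+1+A)/(2*π) := by push_cast; ring
      have c2 : (((m+2:ℕ):ℝ) + A)/(2*π) = ((m:ℝ)+2+A)/(2*π) := by push_cast; ring
      rw [c1] at h1; rw [c2] at h2
      have hm0 : (0:ℝ) ≤ (m:ℝ) := Nat.cast_nonneg m
      have hx1 : (0:ℝ) < ((m:ℝ)+1+A)/(2*π) := by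
        apply div_pos (by linarith) (by positivity)
      have hx2 : (0:ℝ) < ((m:ℝ)+2+A)/(2*π) := by
        apply div_pos (by linarith) (by positivity)
      have q1 : ((m:ℝ)+1+A)/(2*π) ≤ (rr m)^2 := by
        have hs := Real.sq_sqrt hx1.le
        have := pow_le_pow_left₀ (Real.sqrt_nonneg _) h1 2
        linarith [this, hs.symm.le, hs.le]
      have q2 : ((m:ℝ)+2+A)/(2*π) ≤ (rr (m+1))^2 := by
        have hs := Real.sq_sqrt hx2.le
        have := pow_le_pow_left₀ (Real.sqrt_nonneg _) h2 2
        linarith [this, hs.symm.le, hs.le]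
      have hprod : (rr m)^2 * (rr (m+1))^2 = (((m:ℝ)+2)/(2*π))^2 := by
        rw [← mul_pow, rr_mul m]
      have hmul := mul_le_mul q1 q2 hx2.le (sq_nonneg (rr m))
      rw [hprod] at hmul
      have e1 : (((m:ℝ)+1+A)/(2*π))*(((m:ℝ)+2+A)/(2*π))
          = (((m:ℝ)+1+A)*((m:ℝ)+2+A))/(4*π^2) := by ring
      have e2 : ((((m:ℝ)+2))/(2*π))^2 = (((m:ℝ)+2)^2)/(4*π^2) := by ring
      rw [e1, e2] at hmul
      exact (div_le_div_iff_of_pos_right (by positivity)).mp hmul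
    obtain ⟨N, hN⟩ := exists_nat_gt ((2-3*A-A^2)/(2*A-1))
    have hN' : 2-3*A-A^2 < (N:ℝ)*(2*A-1) := by
      rw [div_lt_iff₀ (by linarith)] at hN
      linarith
    nlinarith [key N]
  · intro B hB
    have h := hB 1 (by norm_num)
    have h' : rr 0 ≤ Real.sqrt ((((1:ℕ):ℝ) + B)/(2*π)) := h
    rw [rr_zero] at h'
    norm_num at h'
    have hx : 0 < ((1:ℝ)+B)/(2*π) :=
      Real.sqrt_pos.mp (lt_of_lt_of_le (by norm_num) h')
    have hs := Real.sq_sqrt hx.le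
    have h2 : (1/2:ℝ)^2 ≤ ((1:ℝ)+B)/(2*π) := by
      rw [← hs]
      exact pow_le_pow_left₀ (by norm_num) h' 2
    rw [le_div_iff₀ (by positivity)] at h2
    nlinarith [h2]
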